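/- Let k ≥ 1 and let k_1,…,k_n be positive integers with k_1 + ⋯ + k_n = 2k. Over candidates {A,B,C} ordered A < B < C, consider the weighted profile consisting of: one voter of weight 6k−1 with fixed vote B>C>A, one voter of weight 4k with fixed vote A>B>C, one voter of weight 4k with fixed vote C>B>A, and for each i ∈ {1,…,n} a voter of weight 2k_i whose vote may be chosen arbitrarily from the four votes single-peaked with respect to A < B < C (namely A>B>C, B>A>C, B>C>A, C>B>A). Then: (i) for every choice of these votes and every choice of a minimum-first-place-weight candidate to eliminate, the STV winner is B or C; and (ii) there exists a choice of these votes under which C is the STV winner if and only if there exists a subset S ⊆ {1,…,n} with Σ_{i∈S} k_i = k. -/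

import Mathlib

/-!
Over candidates A < B < C: fixed votes B>C>A (weight 6k-1), A>B>C (weight 4k),
C>B>A (weight 4k), plus for each i a voter of weight 2kᵢ whose vote may be
chosen among the four votes single peaked w.r.t. A < B < C.  Then (i) for
every choice and every legal elimination, the STV winner is B or C; and
(ii) some choice makes C the STV winner iff some subset of the kᵢ sums to k.
-/

namespace Stmt7

inductive Cand where
  | A | B | C
deriving DecidableEq

open Cand

/-- `above l x y` : in the vote given by list `l` (best candidate first),
`x` is ranked above `y`. -/
def above (l : List Cand) (x y : Cand) : Prop := l.idxOf x < l.idxOf y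

instance (l : List Cand) (x y : Cand) : Decidable (above l x y) :=
  inferInstanceAs (Decidable (_ < _))

/-- `first l x` : `x` is the top candidate of the vote `l`. -/
def first (l : List Cand) (x : Cand) : Prop := l.head? = some x

instance (l : List Cand) (x : Cand) : Decidable (first l x) :=
  inferInstanceAs (Decidable (_ = _))

/-- Total weight of the profile. -/
def W (k : ℕ) {n : ℕ} (kk : Fin n → ℕ) : ℕ :=
  (6 * k - 1) + 4 * k + 4 * k + ∑ i, 2 * kk i

/-- Total weight of voters ranking `x` above `y`, where `f` gives the votes
of the free voters. -/
def N (k : ℕ) {n : ℕ} (kk : Fin n → ℕ) (f : Fin n → List Cand) (x y : Cand) : ℕ :=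
  (if above [B, C, A] x y then 6 * k - 1 else 0)
  + (if above [A, B, C] x y then 4 * k else 0)
  + (if above [C, B, A] x y then 4 * k else 0)
  + ∑ i, (if above (f i) x y then 2 * kk i else 0)

/-- First-place weight of candidate `x`. -/
def plur (k : ℕ) {n : ℕ} (kk : Fin n → ℕ) (f : Fin n → List Cand) (x : Cand) : ℕ :=
  (if first [B, C, A] x then 6 * k - 1 else 0)
  + (if first [A, B, C] x then 4 * k else 0)
  + (if first [C, B, A] x then 4 * k else 0)
  + ∑ i, (if first (f i) x then 2 * kk i else 0)

/-- `x` is the STV winner when candidate `e` is eliminated (for three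
candidates): either `x` has a strict majority of first-place weight, or no
candidate has a majority, `x` survives the elimination of `e` and beats the
other surviving candidate in pairwise majority. -/
def IsSTVWinner (plur : Cand → ℕ) (N : Cand → Cand → ℕ) (W : ℕ) (e x : Cand) : Prop :=
  (2 * plur x > W) ∨
  ((∀ y, ¬ 2 * plur y > W) ∧ x ≠ e ∧ ∀ y, y ≠ e → y ≠ x → N x y > N y x)

/-! ### Auxiliary machinery -/

private lemma ite_sum {n : ℕ} {c : Prop} [Decidable c] (g : Fin n → ℕ) :
    (if c then ∑ i, g i else 0) = ∑ i, if c then g i else 0 := by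
  split <;> simp

/-- Total weight of free voters voting `A>B>C`. -/
def sA {n : ℕ} (kk : Fin n → ℕ) (f : Fin n → List Cand) : ℕ :=
  ∑ i, if f i = [A,B,C] then kk i else 0
/-- Total weight of free voters voting `B>A>C`. -/
def sBA {n : ℕ} (kk : Fin n → ℕ) (f : Fin n → List Cand) : ℕ :=
  ∑ i, if f i = [B,A,C] then kk i else 0
/-- Total weight of free voters voting `B>C>A`. -/
def sBC {n : ℕ} (kk : Fin n → ℕ) (f : Fin n → List Cand) : ℕ :=
  ∑ i, if f i = [B,C,A] then kk i else 0
/-- Total weight of free voters voting `C>B>A`. -/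
def sC {n : ℕ} (kk : Fin n → ℕ) (f : Fin n → List Cand) : ℕ :=
  ∑ i, if f i = [C,B,A] then kk i else 0

variable {n : ℕ} {kk : Fin n → ℕ} {f : Fin n → List Cand}

lemma key (hf : ∀ i, f i ∈ [[A,B,C],[B,A,C],[B,C,A],[C,B,A]]) (x y : Cand) :
    (∑ i, if above (f i) x y then 2 * kk i else 0)
      = (if above [A,B,C] x y then 2 * sA kk f else 0)
      + (if above [B,A,C] x y then 2 * sBA kk f else 0)
      + (if above [B,C,A] x y then 2 * sBC kk f else 0)
      + (if above [C,B,A] x y then 2 * sC kk f else 0) := by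
  unfold sA sBA sBC sC
  rw [Finset.mul_sum, Finset.mul_sum, Finset.mul_sum, Finset.mul_sum,
    ite_sum, ite_sum, ite_sum, ite_sum, ← Finset.sum_add_distrib,
    ← Finset.sum_add_distrib, ← Finset.sum_add_distrib]
  refine Finset.sum_congr rfl fun i _ => ?_
  have h := hf i
  simp only [List.mem_cons, List.not_mem_nil, or_false] at h
  rcases h with h | h | h | h <;> simp [h]

lemma keyP (hf : ∀ i, f i ∈ [[A,B,C],[B,A,C],[B,C,A],[C,B,A]]) (x : Cand) :
    (∑ i, if first (f i) x then 2 * kk i else 0)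
      = (if first [A,B,C] x then 2 * sA kk f else 0)
      + (if first [B,A,C] x then 2 * sBA kk f else 0)
      + (if first [B,C,A] x then 2 * sBC kk f else 0)
      + (if first [C,B,A] x then 2 * sC kk f else 0) := by
  unfold sA sBA sBC sC
  rw [Finset.mul_sum, Finset.mul_sum, Finset.mul_sum, Finset.mul_sum,
    ite_sum, ite_sum, ite_sum, ite_sum, ← Finset.sum_add_distrib,
    ← Finset.sum_add_distrib, ← Finset.sum_add_distrib]
  refine Finset.sum_congr rfl fun i _ => ?_
  have h := hf i
  simp only [List.mem_cons, List.not_mem_nil, or_false] at h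
  rcases h with h | h | h | h <;> simp [h]

lemma sum_four (hf : ∀ i, f i ∈ [[A,B,C],[B,A,C],[B,C,A],[C,B,A]]) :
    sA kk f + sBA kk f + sBC kk f + sC kk f = ∑ i, kk i := by
  unfold sA sBA sBC sC
  rw [← Finset.sum_add_distrib, ← Finset.sum_add_distrib, ← Finset.sum_add_distrib]
  refine Finset.sum_congr rfl fun i _ => ?_
  have h := hf i
  simp only [List.mem_cons, List.not_mem_nil, or_false] at h
  rcases h with h | h | h | h <;> simp [h]

lemma hNAB (k : ℕ) (hf : ∀ i, f i ∈ [[A,B,C],[B,A,C],[B,C,A],[C,B,A]]) :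
    N k kk f A B = 4 * k + 2 * sA kk f := by
  rw [N, key hf]
  simp (config := { decide := true }) only [above, if_true, if_false]
  omega

lemma hNBA (k : ℕ) (hf : ∀ i, f i ∈ [[A,B,C],[B,A,C],[B,C,A],[C,B,A]]) :
    N k kk f B A = (6 * k - 1) + 4 * k + 2 * (sBA kk f + sBC kk f + sC kk f) := by
  rw [N, key hf]
  simp (config := { decide := true }) only [above, if_true, if_false]
  omega

lemma hNAC (k : ℕ) (hf : ∀ i, f i ∈ [[A,B,C],[B,A,C],[B,C,A],[C,B,A]]) :
    N k kk f A C = 4 * k + 2 * (sA kk f + sBA kk f) := by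
  rw [N, key hf]
  simp (config := { decide := true }) only [above, if_true, if_false]
  omega

lemma hNCA (k : ℕ) (hf : ∀ i, f i ∈ [[A,B,C],[B,A,C],[B,C,A],[C,B,A]]) :
    N k kk f C A = (6 * k - 1) + 4 * k + 2 * (sBC kk f + sC kk f) := by
  rw [N, key hf]
  simp (config := { decide := true }) only [above, if_true, if_false]
  omega

lemma hNBC (k : ℕ) (hf : ∀ i, f i ∈ [[A,B,C],[B,A,C],[B,C,A],[C,B,A]]) :
    N k kk f B C = (6 * k - 1) + 4 * k + 2 * (sA kk f + sBA kk f + sBC kk f) := by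
  rw [N, key hf]
  simp (config := { decide := true }) only [above, if_true, if_false]
  omega

lemma hNCB (k : ℕ) (hf : ∀ i, f i ∈ [[A,B,C],[B,A,C],[B,C,A],[C,B,A]]) :
    N k kk f C B = 4 * k + 2 * sC kk f := by
  rw [N, key hf]
  simp (config := { decide := true }) only [above, if_true, if_false]
  omega

lemma hPA (k : ℕ) (hf : ∀ i, f i ∈ [[A,B,C],[B,A,C],[B,C,A],[C,B,A]]) :
    plur k kk f A = 4 * k + 2 * sA kk f := by
  rw [plur, keyP hf]
  simp (config := { decide := true }) only [first, if_true, if_false]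
  omega

lemma hPB (k : ℕ) (hf : ∀ i, f i ∈ [[A,B,C],[B,A,C],[B,C,A],[C,B,A]]) :
    plur k kk f B = (6 * k - 1) + 2 * (sBA kk f + sBC kk f) := by
  rw [plur, keyP hf]
  simp (config := { decide := true }) only [first, if_true, if_false]
  omega

lemma hPC (k : ℕ) (hf : ∀ i, f i ∈ [[A,B,C],[B,A,C],[B,C,A],[C,B,A]]) :
    plur k kk f C = 4 * k + 2 * sC kk f := by
  rw [plur, keyP hf]
  simp (config := { decide := true }) only [first, if_true, if_false]
  omega

lemma hWval (k : ℕ) (hsum : ∑ i, kk i = 2 * k) : W k kk = 18 * k - 1 := by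
  have h4 : ∑ i, 2 * kk i = 4 * k := by
    rw [← Finset.mul_sum, hsum]; ring
  rw [W, h4]; omega

theorem stv_single_peaked_elicitation
    (k n : ℕ) (hk : 1 ≤ k) (kk : Fin n → ℕ) (hpos : ∀ i, 1 ≤ kk i)
    (hsum : ∑ i, kk i = 2 * k) :
    ((∀ f : Fin n → List Cand,
        (∀ i, f i ∈ [[A, B, C], [B, A, C], [B, C, A], [C, B, A]]) →
        ∀ e : Cand, (∀ y, plur k kk f e ≤ plur k kk f y) →
        ∀ x : Cand, IsSTVWinner (plur k kk f) (N k kk f) (W k kk) e x →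
          x = B ∨ x = C)
      ∧
      ((∃ f : Fin n → List Cand, ∃ e : Cand,
          (∀ i, f i ∈ [[A, B, C], [B, A, C], [B, C, A], [C, B, A]]) ∧
          (∀ y, plur k kk f e ≤ plur k kk f y) ∧
          IsSTVWinner (plur k kk f) (N k kk f) (W k kk) e C)
        ↔ ∃ S : Finset (Fin n), ∑ i ∈ S, kk i = k)) := by
  have hW := hWval k (kk := kk) hsum
  constructor
  · -- part (i)
    intro f hf e he x hx
    have h4 : sA kk f + sBA kk f + sBC kk f + sC kk f = 2 * k := by
      rw [sum_four hf, hsum]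
    cases x with
    | B => exact Or.inl rfl
    | C => exact Or.inr rfl
    | A =>
      exfalso
      rcases hx with hmaj | ⟨_, hne, hbeat⟩
      · rw [hPA k hf, hW] at hmaj; omega
      · cases e with
        | A => exact hne rfl
        | B =>
          have h := hbeat C (by decide) (by decide)
          rw [hNAC k hf, hNCA k hf] at h
          omega
        | C =>
          have h := hbeat B (by decide) (by decide)
          rw [hNAB k hf, hNBA k hf] at h
          omega
  · constructor
    · -- winner C  →  subset sum
      rintro ⟨f, e, hf, hmin, hwin⟩
      have h4 : sA kk f + sBA kk f + sBC kk f + sC kk f = 2 * k := by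
        rw [sum_four hf, hsum]
      have hkey : sA kk f = k := by
        rcases hwin with hmaj | ⟨_, hne, hbeat⟩
        · rw [hPC k hf, hW] at hmaj; omega
        · cases e with
          | C => exact absurd rfl hne
          | A =>
            have h := hbeat B (by decide) (by decide)
            rw [hNCB k hf, hNBC k hf] at h
            omega
          | B =>
            have h1 := hmin A
            have h2 := hmin C
            rw [hPA k hf, hPB k hf] at h1
            rw [hPC k hf, hPB k hf] at h2
            omega
      refine ⟨Finset.univ.filter (fun i => f i = [A,B,C]), ?_⟩
      rw [Finset.sum_filter]
      exact hkey
    · -- subset sum  →  winner C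
      rintro ⟨S, hS⟩
      refine ⟨fun i => if i ∈ S then [A,B,C] else [C,B,A], B, ?_, ?_, ?_⟩ <;>
        try skip
      case _ =>
        intro i
        by_cases h : i ∈ S <;> simp [h]
      all_goals
        set f : Fin n → List Cand := fun i => if i ∈ S then [A,B,C] else [C,B,A] with hfdef
      all_goals
        have hf : ∀ i, f i ∈ [[A,B,C],[B,A,C],[B,C,A],[C,B,A]] := by
          intro i; by_cases h : i ∈ S <;> simp [hfdef, h]
      all_goals
        have hsA : sA kk f = k := by
          rw [sA]
          rw [show (∑ i, if f i = [A,B,C] then kk i else 0)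
              = ∑ i, if i ∈ S then kk i else 0 from
            Finset.sum_congr rfl fun i _ => by by_cases h : i ∈ S <;> simp [hfdef, h]]
          rw [Finset.sum_ite_mem, Finset.univ_inter, hS]
      all_goals
        have hsC : sC kk f = k := by
          rw [sC]
          rw [show (∑ i, if f i = [C,B,A] then kk i else 0)
              = ∑ i, if i ∈ S then 0 else kk i from
            Finset.sum_congr rfl fun i _ => by by_cases h : i ∈ S <;> simp [hfdef, h]]
          have := Finset.sum_ite_mem Finset.univ S (fun _ => (0:ℕ))
          have hsplit : (∑ i, if i ∈ S then 0 else kk i) + ∑ i ∈ S, kk i = ∑ i, kk i := by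
            rw [show (∑ i, kk i) = ∑ i, ((if i ∈ S then 0 else kk i)
                + (if i ∈ S then kk i else 0)) from
              Finset.sum_congr rfl fun i _ => by by_cases h : i ∈ S <;> simp [h]]
            rw [Finset.sum_add_distrib]
            congr 1
            rw [Finset.sum_ite_mem, Finset.univ_inter]
          omega
      all_goals
        have hsBA : sBA kk f = 0 := by
          rw [sBA]
          refine Finset.sum_eq_zero fun i _ => ?_
          by_cases h : i ∈ S <;> simp [hfdef, h]
      all_goals
        have hsBC : sBC kk f = 0 := by
          rw [sBC]
          refine Finset.sum_eq_zero fun i _ => ?_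
          by_cases h : i ∈ S <;> simp [hfdef, h]
      · -- minimality of plur at B
        intro y
        rw [hPB k hf]
        cases y with
        | A => rw [hPA k hf]; omega
        | B => rw [hPB k hf]
        | C => rw [hPC k hf]; omega
      · -- C is the STV winner after eliminating B
        refine Or.inr ⟨?_, by decide, ?_⟩
        · intro y
          cases y with
          | A => rw [hPA k hf, hW]; omega
          | B => rw [hPB k hf, hW]; omega
          | C => rw [hPC k hf, hW]; omega
        · intro y hy1 hy2
          cases y with
          | A =>
            rw [hNCA k hf, hNAC k hf]
            omega
          | B => exact absurd rfl hy1
          | C => exact absurd rfl hy2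

end Stmt7
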